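/- arXiv:2002.08924 — 6 statements merged into one kernel-verified Lean document; each statement's English description precedes it below -/
import Mathlib

section
/- For a local rule f: {0,1,2}^3 → {0,1,2} with global map F acting on periodic configurations (circular sequences) of any length L ≥ 3 by (F(x))_i = f(x_{i-1}, x_i, x_{i+1}) (indices mod L), and a weight function Ψ: {0,1,2} → ℤ, the quantity ∑_{i=0}^{L-1} Ψ(x_i) is conserved by F for all L and all x if and only if for all x_0, x_1, x_2 ∈ {0,1,2}: Ψ(f(x_0,x_1,x_2)) - Ψ(x_0) = Ψ(f(0,0,x_1)) + Ψ(f(0,x_1,x_2)) - Ψ(f(0,0,x_0)) - Ψ(f(0,x_0,x_1)). -/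
instance (n : ℕ) : NeZero (n + 3) := ⟨by omega⟩

abbrev Rule3 := Fin 3 → Fin 3 → Fin 3 → Fin 3
abbrev Rule2 := Fin 2 → Fin 2 → Fin 2 → Fin 2

/-- Global map of a ternary nearest-neighbour CA on cyclic configurations. -/
def glob3 {n : ℕ} (f : Rule3) (x : ZMod n → Fin 3) : ZMod n → Fin 3 :=
  fun i => f (x (i - 1)) (x i) (x (i + 1))

/-- Global map of a binary (elementary) CA on cyclic configurations. -/
def glob2 {n : ℕ} (g : Rule2) (x : ZMod n → Fin 2) : ZMod n → Fin 2 :=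
  fun i => g (x (i - 1)) (x i) (x (i + 1))

/-- `f` conserves the additive quantity with weight `Ψ` on all cyclic
configurations of all lengths `L ≥ 3`. -/
def conserves3 (f : Rule3) (Ψ : Fin 3 → ℤ) : Prop :=
  ∀ L : ℕ, ∀ x : ZMod (L + 3) → Fin 3,
    (∑ i, Ψ (glob3 f x i)) = ∑ i, Ψ (x i)

def Ψ0 : Fin 3 → ℤ := fun x => (1 - (x.val : ℤ)) * (2 - (x.val : ℤ)) / 2
def Ψ1 : Fin 3 → ℤ := fun x => (x.val : ℤ) * (2 - (x.val : ℤ))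
def Ψ2 : Fin 3 → ℤ := fun x => (x.val : ℤ) * ((x.val : ℤ) - 1) / 2
def Ψs : Fin 3 → ℤ := fun x => (x.val : ℤ)

/-- `f` conserves the number of 0's, of 1's and of 2's. -/
def allConserving3 (f : Rule3) : Prop :=
  conserves3 f Ψ0 ∧ conserves3 f Ψ1 ∧ conserves3 f Ψ2

/-- A binary rule is number-conserving. -/
def numConserving2 (g : Rule2) : Prop :=
  ∀ L : ℕ, ∀ x : ZMod (L + 3) → Fin 2,
    (∑ i, (glob2 g x i).val) = ∑ i, (x i).val

/-- The elementary CA rule with Wolfram number `w`. -/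
def ecaRule (w : ℕ) : Rule2 :=
  fun a b c => ⟨w / 2 ^ (4 * a.val + 2 * b.val + c.val) % 2, Nat.mod_lt _ (by norm_num)⟩

/-- Wolfram number of a binary rule. -/
def wolfram2 (g : Rule2) : ℕ :=
  ∑ a : Fin 2, ∑ b : Fin 2, ∑ c : Fin 2,
    (g a b c).val * 2 ^ (4 * a.val + 2 * b.val + c.val)

/-- Embedding of `{0,1}` into `{0,1,2}` as `{0,1}`. -/
def i01 : Fin 2 → Fin 3 := Fin.castLE (by norm_num)
/-- Embedding of `{0,1}` into `{0,1,2}` as `{0,2}`. -/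
def i02 : Fin 2 → Fin 3 := fun a => ⟨2 * a.val, by have := a.isLt; omega⟩
/-- Embedding of `{0,1}` into `{0,1,2}` as `{1,2}`. -/
def i12 : Fin 2 → Fin 3 := fun a => ⟨a.val + 1, by have := a.isLt; omega⟩

/-- The binary projection `f|_{01}` of `f` exists and equals the binary rule `h`. -/
def agrees01 (f : Rule3) (h : Rule2) : Prop :=
  ∀ a b c : Fin 2, f (i01 a) (i01 b) (i01 c) = i01 (h a b c)

/-- The binary projection `f|_{02}` of `f` exists and equals the binary rule `h`. -/
def agrees02 (f : Rule3) (h : Rule2) : Prop :=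
  ∀ a b c : Fin 2, f (i02 a) (i02 b) (i02 c) = i02 (h a b c)

/-- The binary projection `f|_{12}` of `f` exists and equals the binary rule `h`. -/
def agrees12 (f : Rule3) (h : Rule2) : Prop :=
  ∀ a b c : Fin 2, f (i12 a) (i12 b) (i12 c) = i12 (h a b c)

/-- `f` is reducible to two states: all three binary projections exist. -/
def reducible3 (f : Rule3) : Prop :=
  (∃ h, agrees01 f h) ∧ (∃ h, agrees02 f h) ∧ (∃ h, agrees12 f h)

/-- Number of occurrences of symbol `k` in the cyclic configuration `x`. -/
def count3 {n : ℕ} [NeZero n] (x : ZMod n → Fin 3) (k : Fin 3) : ℕ :=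
  (Finset.univ.filter fun i => x i = k).card

lemma sum6 (g : ZMod (3+3) → ℤ) : ∑ i, g i = g 0 + g 1 + g 2 + g 3 + g 4 + g 5 := by
  show ∑ i : Fin 6, g i = _
  exact Fin.sum_univ_six _

/-- Hattori–Takesue theorem for ternary nearest-neighbour CA (with `p = 0`). -/
theorem hattori_takesue (f : Rule3) (Ψ : Fin 3 → ℤ) :
    conserves3 f Ψ ↔
      ∀ x0 x1 x2 : Fin 3,
        Ψ (f x0 x1 x2) - Ψ x0 =
          Ψ (f 0 0 x1) + Ψ (f 0 x1 x2) - Ψ (f 0 0 x0) - Ψ (f 0 x0 x1) := by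
  constructor
  · intro hc x0 x1 x2
    have h0 : Ψ (f 0 0 0) = Ψ 0 := by
      have h := hc 0 (fun _ => 0)
      simp [glob3, Finset.sum_const] at h
      have hcard : (Finset.univ : Finset (ZMod 3)).card = 3 := by decide
      omega
    have hA := hc 3 (fun i => if i = 0 then x0 else if i = 1 then x1 else if i = 2 then x2 else 0)
    have hB := hc 3 (fun i => if i = 0 then x1 else if i = 1 then x2 else 0)
    rw [sum6, sum6] at hA hB
    simp (config := { decide := true }) only [glob3, if_true, if_false] at hA hB
    linarith
  · intro h L x
    have key : ∀ i : ZMod (L+3), Ψ (glob3 f x i) =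
        Ψ (x (i-1)) + ((Ψ (f 0 0 (x i)) + Ψ (f 0 (x i) (x (i+1))))
                 - (Ψ (f 0 0 (x (i-1))) + Ψ (f 0 (x (i-1)) (x i)))) := by
      intro i
      have := h (x (i-1)) (x i) (x (i+1))
      simp only [glob3]
      linarith
    rw [Finset.sum_congr rfl (fun i _ => key i)]
    rw [Finset.sum_add_distrib, Finset.sum_sub_distrib]
    have s1 : ∑ i : ZMod (L+3), Ψ (x (i-1)) = ∑ i, Ψ (x i) :=
      (Fintype.sum_equiv (Equiv.addRight (1 : ZMod (L+3))) _ _ (fun i => by simp)).symm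
    have s2 : ∑ i : ZMod (L+3), (Ψ (f 0 0 (x (i-1))) + Ψ (f 0 (x (i-1)) (x i)))
        = ∑ i, (Ψ (f 0 0 (x i)) + Ψ (f 0 (x i) (x (i+1)))) :=
      (Fintype.sum_equiv (Equiv.addRight (1 : ZMod (L+3))) _ _ (fun i => by simp)).symm
    rw [s1, s2]
    ring
end

section
/- The number of local rules f: {0,1,2}^3 → {0,1,2} that conserve the number of cells in state 1 (i.e., conserve Ψ_1(x) = x(2-x) in the sense that ∑_i Ψ_1(x_i) is invariant under the global map on every finite cyclic configuration) is exactly 9 · 2^18 = 2359296. -/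
/- ------------------- auxiliary development ------------------- -/

namespace HTaux

abbrev BRule := Fin 3 → Fin 3 → Fin 3 → Fin 2

/-- boolean projection: indicator that `f` outputs state 1 -/
def pr (f : Rule3) : BRule := fun a b c => if f a b c = 1 then 1 else 0

/-- flux derived from a boolean rule -/
def φg (g : BRule) (a b : Fin 3) : ℤ :=
  ((g 0 0 a).val : ℤ) - Ψ1 0 + (((g 0 a b).val : ℤ) - Ψ1 a)

/-- Hattori–Takesue condition for the boolean rule. -/
def Q (g : BRule) : Prop :=
  ∀ a b c, ((g a b c).val : ℤ) = Ψ1 b + φg g b c - φg g a b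

instance : DecidablePred Q := fun g => by unfold Q; infer_instance

lemma psi1_pr (f : Rule3) (a b c : Fin 3) :
    ((pr f a b c).val : ℤ) = Ψ1 (f a b c) := by
  have : ∀ v : Fin 3, (((if v = 1 then (1 : Fin 2) else 0)).val : ℤ) = Ψ1 v := by decide
  exact this (f a b c)

lemma sum_zmod6 (F : ZMod 6 → ℤ) : ∑ i, F i = F 0 + F 1 + F 2 + F 3 + F 4 + F 5 :=
  Fin.sum_univ_six F
lemma sum_zmod5 (F : ZMod 5 → ℤ) : ∑ i, F i = F 0 + F 1 + F 2 + F 3 + F 4 :=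
  Fin.sum_univ_five F

lemma forward_aux (f : Rule3) (h : conserves3 f Ψ1) (a b c : Fin 3) :
    Ψ1 (f a b c) - Ψ1 b =
      (Ψ1 (f 0 0 b) - Ψ1 0 + (Ψ1 (f 0 b c) - Ψ1 b))
      - (Ψ1 (f 0 0 a) - Ψ1 0 + (Ψ1 (f 0 a b) - Ψ1 a)) := by
  have h6 := h 3 (fun i : ZMod 6 => if i = 2 then a else if i = 3 then b else if i = 4 then c else 0)
  have h5 := h 2 (fun i : ZMod 5 => if i = 2 then b else if i = 3 then c else 0)
  rw [sum_zmod6, sum_zmod6] at h6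
  rw [sum_zmod5, sum_zmod5] at h5
  simp only [glob3] at h6 h5
  simp (config := { decide := true }) only [ite_true, ite_false] at h6 h5
  linarith

lemma forward (f : Rule3) (h : conserves3 f Ψ1) : Q (pr f) := by
  intro a b c
  have := forward_aux f h a b c
  simp only [φg, psi1_pr]
  linarith

lemma backward (f : Rule3) (h : Q (pr f)) : conserves3 f Ψ1 := by
  intro L x
  set φ := φg (pr f) with hφ
  have hf : ∀ a b c, Ψ1 (f a b c) = Ψ1 b + φ b c - φ a b := by
    intro a b c; rw [← psi1_pr]; exact h a b c
  have key : ∑ i, φ (x i) (x (i + 1)) = ∑ i, φ (x (i - 1)) (x i) := by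
    apply Fintype.sum_equiv (Equiv.addRight (1 : ZMod (L + 3)))
    intro i
    simp [Equiv.coe_addRight, add_sub_cancel_right]
  calc ∑ i, Ψ1 (glob3 f x i)
      = ∑ i, (Ψ1 (x i) + φ (x i) (x (i + 1)) - φ (x (i - 1)) (x i)) := by
        exact Finset.sum_congr rfl fun i _ => hf _ _ _
    _ = ∑ i, Ψ1 (x i) := by
        rw [Finset.sum_sub_distrib, Finset.sum_add_distrib, key]; ring

lemma conserves_iff (f : Rule3) : conserves3 f Ψ1 ↔ Q (pr f) :=
  ⟨forward f, backward f⟩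

/- ---------- parametrization of valid boolean rules ---------- -/

def φr (r : Fin 3 → Fin 3 → Fin 2) (a b : Fin 3) : ℤ :=
  ((r 0 a).val : ℤ) - Ψ1 0 + (((r a b).val : ℤ) - Ψ1 a)

def recon (r : Fin 3 → Fin 3 → Fin 2) : BRule :=
  fun a b c => if Ψ1 b + φr r b c - φr r a b = 1 then 1 else 0

def good (r : Fin 3 → Fin 3 → Fin 2) : Prop :=
  Q (recon r) ∧ (fun a b => recon r 0 a b) = r

instance : DecidablePred good := fun r => by unfold good; infer_instance

lemma recon_restr {g : BRule} (hg : Q g) : recon (fun a b => g 0 a b) = g := by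
  have h2 : ∀ w : Fin 2, (if ((w.val : ℤ)) = 1 then (1 : Fin 2) else 0) = w := by decide
  funext a b c
  have hq := hg a b c
  show (if Ψ1 b + φg g b c - φg g a b = 1 then (1 : Fin 2) else 0) = g a b c
  rw [← hq]
  exact h2 _

def gEquiv : {g : BRule // Q g} ≃ {r : Fin 3 → Fin 3 → Fin 2 // good r} where
  toFun g := ⟨fun a b => g.1 0 a b, by
    constructor
    · rw [recon_restr g.2]; exact g.2
    · rw [recon_restr g.2]⟩
  invFun r := ⟨recon r.1, r.2.1⟩
  left_inv g := Subtype.ext (recon_restr g.2)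
  right_inv r := Subtype.ext r.2.2

set_option maxHeartbeats 4000000 in
set_option maxRecDepth 100000 in
lemma card_good : Fintype.card {r : Fin 3 → Fin 3 → Fin 2 // good r} = 9 := by decide

/- ---------- fibers ---------- -/

def fiberEquiv (g : BRule) : {f : Rule3 // pr f = g} ≃
    ∀ t : Fin 3 × Fin 3 × Fin 3,
      {v : Fin 3 // (if v = 1 then (1 : Fin 2) else 0) = g t.1 t.2.1 t.2.2} where
  toFun f t := ⟨f.1 t.1 t.2.1 t.2.2,
    congrFun (congrFun (congrFun f.2 t.1) t.2.1) t.2.2⟩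
  invFun h := ⟨fun a b c => (h (a, b, c)).1, by
    funext a b c; exact (h (a, b, c)).2⟩
  left_inv f := rfl
  right_inv h := rfl

lemma factor_card (w : Fin 2) :
    Nat.card {v : Fin 3 // (if v = 1 then (1 : Fin 2) else 0) = w} =
      if w = 1 then 1 else 2 := by
  rw [Nat.card_eq_fintype_card]; revert w; decide

set_option maxHeartbeats 4000000 in
set_option maxRecDepth 100000 in
lemma prod18 : ∀ r : Fin 3 → Fin 3 → Fin 2, good r →
    (∏ t : Fin 3 × Fin 3 × Fin 3,
      if recon r t.1 t.2.1 t.2.2 = 1 then (1 : ℕ) else 2) = 2 ^ 18 := by decide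

lemma fiber_card {g : BRule} (hg : Q g) :
    Nat.card {f : Rule3 // pr f = g} = 2 ^ 18 := by
  rw [Nat.card_congr (fiberEquiv g), Nat.card_pi]
  rw [Finset.prod_congr rfl fun (t : Fin 3 × Fin 3 × Fin 3) _ => factor_card (g t.1 t.2.1 t.2.2)]
  have hgood : good (fun a b => g 0 a b) := by
    constructor
    · rw [recon_restr hg]; exact hg
    · rw [recon_restr hg]
  have := prod18 _ hgood
  rw [recon_restr hg] at this
  exact this

/- ---------- sigma decomposition ---------- -/

def sigmaEquiv : {f : Rule3 // Q (pr f)} ≃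
    Σ g : {g : BRule // Q g}, {f : Rule3 // pr f = g.1} where
  toFun f := ⟨⟨pr f.1, f.2⟩, ⟨f.1, rfl⟩⟩
  invFun s := ⟨s.2.1, by rw [show pr s.2.1 = s.1.1 from s.2.2]; exact s.1.2⟩
  left_inv f := rfl
  right_inv := by rintro ⟨⟨g, hg⟩, f, h⟩; cases h; rfl

set_option maxRecDepth 100000 in
lemma main_count : Nat.card {f : Rule3 // conserves3 f Ψ1} = 9 * 2 ^ 18 := by
  have e1 : {f : Rule3 // conserves3 f Ψ1} ≃ {f : Rule3 // Q (pr f)} :=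
    Equiv.subtypeEquivRight fun f => conserves_iff f
  rw [Nat.card_congr (e1.trans sigmaEquiv)]
  rw [Nat.card_eq_fintype_card, Fintype.card_sigma]
  have hfib : ∀ g : {g : BRule // Q g},
      Fintype.card {f : Rule3 // pr f = g.1} = 2 ^ 18 := by
    intro g
    rw [← Nat.card_eq_fintype_card]
    exact fiber_card g.2
  have h9 : Fintype.card {g : BRule // Q g} = 9 :=
    (Fintype.card_congr gEquiv).trans card_good
  rw [Finset.sum_congr rfl fun g _ => hfib g, Finset.sum_const, Finset.card_univ, h9,
    smul_eq_mul]

end HTaux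

/-- There are exactly `9 * 2^18 = 2359296` ternary rules conserving the number of 1's. -/
theorem count_conserving_ones :
    Nat.card {f : Rule3 // conserves3 f Ψ1} = 9 * 2 ^ 18 := by
  exact HTaux.main_count
end

section
/- The number of local rules f: {0,1,2}^3 → {0,1,2} that conserve the number of cells in state 0 (weight Ψ_0(x) = (1-x)(2-x)/2, the indicator of state 0) is exactly 9 · 2^18. -/
set_option maxRecDepth 8000
set_option linter.constructorNameAsVariable false


-- ====== auxiliary ======

def ib : Bool → ℤ := fun b => if b then 1 else 0

def Φt : Fin 9 → Fin 3 → Fin 3 → ℤ :=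
  ![![![0,0,0],![-1,-1,-1],![-1,-1,-1]],
    ![![0,0,0],![-1,0,0],![-1,0,0]],
    ![![0,0,0],![-1,0,0],![0,0,0]],
    ![![0,0,0],![0,0,0],![-1,0,0]],
    ![![0,0,0],![0,0,0],![0,0,0]],
    ![![0,0,1],![0,0,0],![0,0,0]],
    ![![0,1,0],![0,0,0],![0,0,0]],
    ![![0,1,1],![0,0,0],![0,0,0]],
    ![![0,1,1],![0,1,1],![0,1,1]]]

def masks (k : Fin 9) (a b c : Fin 3) : Bool :=
  decide (Ψ0 b + Φt k a b - Φt k b c = 1)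

lemma psi0_eq (x : Fin 3) : Ψ0 x = ib (decide (x = 0)) := by
  revert x; decide

lemma flux_masks (k : Fin 9) (a b c : Fin 3) :
    ib (masks k a b c) = Ψ0 b + Φt k a b - Φt k b c := by
  revert k a b c; decide

lemma tele {n : ℕ} [NeZero n] (Φ : Fin 3 → Fin 3 → ℤ) (x : ZMod n → Fin 3) :
    ∑ i, Φ (x i) (x (i + 1)) = ∑ i, Φ (x (i - 1)) (x i) := by
  apply Fintype.sum_equiv (Equiv.addRight (1 : ZMod n))
  intro i
  simp [Equiv.coe_addRight, add_sub_cancel_right]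

lemma cons_of_mask (f : Rule3) (k : Fin 9)
    (h : ∀ a b c, decide (f a b c = 0) = masks k a b c) : conserves3 f Ψ0 := by
  intro L x
  have key : ∀ a b c, Ψ0 (f a b c) = Ψ0 b + Φt k a b - Φt k b c := by
    intro a b c
    rw [psi0_eq (f a b c), h, flux_masks]
  have h1 : ∑ i, Ψ0 (glob3 f x i)
      = ∑ i, (Ψ0 (x i) + Φt k (x (i - 1)) (x i) - Φt k (x i) (x (i + 1))) := by
    apply Finset.sum_congr rfl
    intro i _
    exact key _ _ _
  rw [h1, Finset.sum_sub_distrib, Finset.sum_add_distrib, tele (Φt k) x]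
  ring

-- ====== sums over small cyclic groups ======

lemma sum_zmod3 (g : ZMod 3 → ℤ) : ∑ i, g i = g 0 + g 1 + g 2 :=
  Fin.sum_univ_three g
lemma sum_zmod6 (g : ZMod 6 → ℤ) : ∑ i, g i = g 0 + g 1 + g 2 + g 3 + g 4 + g 5 :=
  Fin.sum_univ_six g
lemma sum_zmod7 (g : ZMod 7 → ℤ) : ∑ i, g i = g 0 + g 1 + g 2 + g 3 + g 4 + g 5 + g 6 :=
  Fin.sum_univ_seven g

-- ====== equations derived from conservation ======

lemma E0 (f : Rule3) (hc : conserves3 f Ψ0) : f 0 0 0 = 0 := by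
  have h := hc 0 (fun _ => 0)
  rw [sum_zmod3, sum_zmod3] at h
  have e : glob3 (n := 3) f (fun _ => 0) 0 = f 0 0 0 := rfl
  have e1 : glob3 (n := 3) f (fun _ => 0) 1 = f 0 0 0 := rfl
  have e2 : glob3 (n := 3) f (fun _ => 0) 2 = f 0 0 0 := rfl
  rw [e, e1, e2] at h
  have p0 : Ψ0 0 = 1 := rfl
  rw [p0] at h
  have h1 : Ψ0 (f 0 0 0) = 1 := by linarith
  revert h1
  have : ∀ x : Fin 3, Ψ0 x = 1 → x = 0 := by decide
  exact this (f 0 0 0)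

lemma E2 (f : Rule3) (hc : conserves3 f Ψ0) (a b : Fin 3) :
    Ψ0 (f b 0 0) + 2 * Ψ0 (f 0 0 0) + Ψ0 (f 0 0 a) + Ψ0 (f 0 a b) + Ψ0 (f a b 0)
      = 4 + Ψ0 a + Ψ0 b := by
  have h := hc 3 ![0,0,0,0,a,b]
  rw [sum_zmod6, sum_zmod6] at h
  have e0 : glob3 (n := 6) f ![0,0,0,0,a,b] 0 = f b 0 0 := rfl
  have e1 : glob3 (n := 6) f ![0,0,0,0,a,b] 1 = f 0 0 0 := rfl
  have e2 : glob3 (n := 6) f ![0,0,0,0,a,b] 2 = f 0 0 0 := rfl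
  have e3 : glob3 (n := 6) f ![0,0,0,0,a,b] 3 = f 0 0 a := rfl
  have e4 : glob3 (n := 6) f ![0,0,0,0,a,b] 4 = f 0 a b := rfl
  have e5 : glob3 (n := 6) f ![0,0,0,0,a,b] 5 = f a b 0 := rfl
  rw [e0, e1, e2, e3, e4, e5] at h
  change _ = Ψ0 0 + Ψ0 0 + Ψ0 0 + Ψ0 0 + Ψ0 a + Ψ0 b at h
  have p0 : Ψ0 0 = 1 := rfl
  rw [p0] at h
  linarith

lemma E3 (f : Rule3) (hc : conserves3 f Ψ0) (a b c : Fin 3) :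
    Ψ0 (f c 0 0) + 2 * Ψ0 (f 0 0 0) + Ψ0 (f 0 0 a) + Ψ0 (f 0 a b) + Ψ0 (f a b c)
      + Ψ0 (f b c 0) = 4 + Ψ0 a + Ψ0 b + Ψ0 c := by
  have h := hc 4 ![0,0,0,0,a,b,c]
  rw [sum_zmod7, sum_zmod7] at h
  have e0 : glob3 (n := 7) f ![0,0,0,0,a,b,c] 0 = f c 0 0 := rfl
  have e1 : glob3 (n := 7) f ![0,0,0,0,a,b,c] 1 = f 0 0 0 := rfl
  have e2 : glob3 (n := 7) f ![0,0,0,0,a,b,c] 2 = f 0 0 0 := rfl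
  have e3 : glob3 (n := 7) f ![0,0,0,0,a,b,c] 3 = f 0 0 a := rfl
  have e4 : glob3 (n := 7) f ![0,0,0,0,a,b,c] 4 = f 0 a b := rfl
  have e5 : glob3 (n := 7) f ![0,0,0,0,a,b,c] 5 = f a b c := rfl
  have e6 : glob3 (n := 7) f ![0,0,0,0,a,b,c] 6 = f b c 0 := rfl
  rw [e0, e1, e2, e3, e4, e5, e6] at h
  change _ = Ψ0 0 + Ψ0 0 + Ψ0 0 + Ψ0 0 + Ψ0 a + Ψ0 b + Ψ0 c at h
  have p0 : Ψ0 0 = 1 := rfl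
  rw [p0] at h
  linarith

-- ====== the finite core ======

def extw (w : Fin 3 → Fin 3 → Bool) (a b c : Fin 3) : Bool :=
  decide (ib (decide (a = 0)) - ib (w 0 a) - ib (w a b) + ib (w 0 b) + ib (w b c) = 1)

lemma ib_decide (b : Bool) : decide (ib b = 1) = b := by revert b; decide

lemma core_aux : ∀ p q r s t u v z : Bool,
    ((∀ a b c, ib (decide (a = 0))
        - ib ((![![true,p,q],![r,s,t],![u,v,z]] : Fin 3 → Fin 3 → Bool) 0 a)
        - ib ((![![true,p,q],![r,s,t],![u,v,z]] : Fin 3 → Fin 3 → Bool) a b)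
        + ib ((![![true,p,q],![r,s,t],![u,v,z]] : Fin 3 → Fin 3 → Bool) 0 b)
        + ib ((![![true,p,q],![r,s,t],![u,v,z]] : Fin 3 → Fin 3 → Bool) b c)
      = ib (extw ![![true,p,q],![r,s,t],![u,v,z]] a b c)) →
    ∃ k : Fin 9, ∀ a b c,
      extw ![![true,p,q],![r,s,t],![u,v,z]] a b c = masks k a b c) := by decide

lemma core : ∀ w : Fin 3 → Fin 3 → Bool, w 0 0 = true →
    (∀ a b c, ib (decide (a = 0)) - ib (w 0 a) - ib (w a b) + ib (w 0 b) + ib (w b c)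
      = ib (extw w a b c)) →
    ∃ k : Fin 9, ∀ a b c, extw w a b c = masks k a b c := by
  intro w hw hV
  have hwW : w = ![![true, w 0 1, w 0 2], ![w 1 0, w 1 1, w 1 2], ![w 2 0, w 2 1, w 2 2]] := by
    funext a b
    fin_cases a <;> fin_cases b <;> first | exact hw | rfl
  rw [hwW] at hV ⊢
  exact core_aux _ _ _ _ _ _ _ _ hV

lemma mask_of_cons (f : Rule3) (hc : conserves3 f Ψ0) :
    ∃ k : Fin 9, ∀ a b c, decide (f a b c = 0) = masks k a b c := by
  have h0 : f 0 0 0 = 0 := E0 f hc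
  have key : ∀ a b c, Ψ0 (f a b c)
      = Ψ0 a - Ψ0 (f 0 0 a) - Ψ0 (f 0 a b) + Ψ0 (f 0 0 b) + Ψ0 (f 0 b c) := by
    intro a b c
    have h2 := E2 f hc b c
    have h3 := E3 f hc a b c
    linarith
  set w : Fin 3 → Fin 3 → Bool := fun a b => decide (f 0 a b = 0) with hw
  have hV : ∀ a b c,
      ib (decide (a = 0)) - ib (w 0 a) - ib (w a b) + ib (w 0 b) + ib (w b c)
        = ib (decide (f a b c = 0)) := by
    intro a b c
    have hk := key a b c
    rw [psi0_eq (f a b c), psi0_eq a, psi0_eq (f 0 0 a), psi0_eq (f 0 a b),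
      psi0_eq (f 0 0 b), psi0_eq (f 0 b c)] at hk
    simp only [hw]
    linarith
  have hzext : ∀ a b c, decide (f a b c = 0) = extw w a b c := by
    intro a b c
    rw [extw, hV a b c, ib_decide]
  have hw00 : w 0 0 = true := by
    simp only [hw]
    exact decide_eq_true h0
  have hVext : ∀ a b c,
      ib (decide (a = 0)) - ib (w 0 a) - ib (w a b) + ib (w 0 b) + ib (w b c)
        = ib (extw w a b c) := by
    intro a b c
    rw [hV a b c, hzext a b c]
  obtain ⟨k, hk⟩ := core w hw00 hVext
  exact ⟨k, fun a b c => (hzext a b c).trans (hk a b c)⟩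

-- ====== counting ======

def Qk (k : Fin 9) (f : Rule3) : Prop := ∀ a b c, decide (f a b c = 0) = masks k a b c

instance (k : Fin 9) : DecidablePred (Qk k) := fun _ => by unfold Qk; infer_instance

def up2 : Fin 2 → Fin 3 := ![1, 2]
def dn3 : Fin 3 → Fin 2 := ![0, 0, 1]

lemma up_dn (x : Fin 3) (hx : x ≠ 0) : up2 (dn3 x) = x := by revert x; decide
lemma dn_up (v : Fin 2) : dn3 (up2 v) = v := by revert v; decide
lemma up_ne (v : Fin 2) : up2 v ≠ 0 := by revert v; decide

def ruleEquiv (k : Fin 9) :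
    {f : Rule3 // Qk k f} ≃
      ({t : Fin 3 × Fin 3 × Fin 3 // masks k t.1 t.2.1 t.2.2 = false} → Fin 2) where
  toFun fp := fun t => dn3 (fp.1 t.1.1 t.1.2.1 t.1.2.2)
  invFun g :=
    ⟨fun a b c =>
      if h : masks k a b c = true then 0
      else up2 (g ⟨(a, b, c), Bool.eq_false_iff.mpr h⟩), by
      intro a b c
      dsimp only
      by_cases h : masks k a b c = true
      · simp [h]
      · simp only [dif_neg h]
        exact (decide_eq_false (up_ne _)).trans (Bool.eq_false_iff.mpr h).symm⟩
  left_inv := by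
    rintro ⟨f, hf⟩
    apply Subtype.ext
    funext a b c
    dsimp only
    by_cases h : masks k a b c = true
    · rw [dif_pos h]
      have := hf a b c
      rw [h] at this
      exact (of_decide_eq_true this).symm
    · rw [dif_neg h]
      apply up_dn
      have := hf a b c
      rw [Bool.eq_false_iff.mpr h] at this
      exact of_decide_eq_false this
  right_inv := by
    intro g
    funext t
    obtain ⟨⟨a, b, c⟩, ht⟩ := t
    dsimp only
    rw [dif_neg (by simp [ht]), dn_up]

lemma card_Qk (k : Fin 9) : Fintype.card {f : Rule3 // Qk k f} = 2 ^ 18 := by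
  rw [Fintype.card_congr (ruleEquiv k), Fintype.card_fun, Fintype.card_fin]
  congr 1
  revert k; decide

lemma masks_inj : ∀ k k' : Fin 9,
    (∀ a b c, masks k a b c = masks k' a b c) → k = k' := by decide

/-- There are exactly `9 * 2^18` ternary rules conserving the number of 0's. -/
theorem count_conserving_zeros :
    Nat.card {f : Rule3 // conserves3 f Ψ0} = 9 * 2 ^ 18 := by
  have hiff : ∀ f : Rule3, conserves3 f Ψ0 ↔ ∃ k : Fin 9, Qk k f := by
    intro f
    constructor
    · exact mask_of_cons f
    · rintro ⟨k, hk⟩; exact cons_of_mask f k hk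
  rw [Nat.card_congr (Equiv.subtypeEquivRight hiff)]
  rw [Nat.card_eq_fintype_card, Fintype.card_subtype]
  have hsplit : (Finset.univ.filter fun f : Rule3 => ∃ k : Fin 9, Qk k f)
      = Finset.univ.biUnion (fun k : Fin 9 => Finset.univ.filter (Qk k)) := by
    ext f
    simp [Finset.mem_biUnion]
  rw [hsplit, Finset.card_biUnion, ]
  · have : ∀ k : Fin 9, (Finset.univ.filter (Qk k)).card = 2 ^ 18 := by
      intro k
      rw [← Fintype.card_subtype]
      exact card_Qk k
    rw [Finset.sum_congr rfl fun k _ => this k]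
    simp
  · intro k _ k' _ hkk'
    rw [Function.onFun, Finset.disjoint_left]
    intro f hf hf'
    simp only [Finset.mem_filter] at hf hf'
    exact hkk' (masks_inj k k' fun a b c => ((hf.2 a b c).symm.trans (hf'.2 a b c)))
end

section
/- There is no local rule g: {0,1}^3 → {0,1} and integers m, n (possibly depending on L) such that for every L ≥ 3 and every cyclic binary configuration x of length L with density ρ = (1/L)∑ x_i ≠ 1/2, iterating the global map of g yields the all-0 configuration when ρ < 1/2 and the all-1 configuration when ρ > 1/2. (Non-existence of a single-rule solution to the binary density classification problem for elementary CA.) -/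

def cfg (l : List ℕ) (n : ℕ) [NeZero n] : ZMod n → Fin 2 :=
  fun i => if l.getD (ZMod.val i) 0 = 1 then 1 else 0

abbrev Check' (w L : ℕ) (l : List ℕ) (q p : ℕ) : Prop :=
  0 < p ∧
  (glob2 (ecaRule w))^[q + p] (cfg l (L+3)) = (glob2 (ecaRule w))^[q] (cfg l (L+3)) ∧
  ((2 * ∑ i, ((cfg l (L+3)) i).val < L + 3 ∧
      ∀ s < q + p, (glob2 (ecaRule w))^[s] (cfg l (L+3)) ≠ fun _ => 0) ∨
   (L + 3 < 2 * ∑ i, ((cfg l (L+3)) i).val ∧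
      ∀ s < q + p, (glob2 (ecaRule w))^[s] (cfg l (L+3)) ≠ fun _ => 1))

def witTable : List (ℕ × List ℕ × ℕ × ℕ) := [
  (0, [1, 1, 0], 1, 1),
  (1, [1, 0, 0, 0], 0, 2),
  (0, [1, 1, 0], 1, 1),
  (0, [1, 0, 0], 0, 3),
  (0, [1, 0, 0], 0, 1),
  (0, [1, 0, 0], 0, 1),
  (0, [1, 1, 0], 1, 1),
  (2, [1, 1, 0, 0, 0], 0, 5),
  (0, [1, 1, 0], 2, 1),
  (1, [1, 0, 0, 0], 0, 2),
  (0, [1, 0, 0], 0, 3),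
  (0, [1, 0, 0], 0, 3),
  (0, [1, 0, 0], 0, 1),
  (0, [1, 0, 0], 0, 1),
  (0, [1, 0, 0], 0, 6),
  (0, [1, 0, 0], 0, 6),
  (0, [1, 1, 0], 1, 1),
  (0, [1, 0, 0], 0, 3),
  (0, [1, 1, 0], 1, 1),
  (2, [1, 1, 0, 0, 0], 0, 2),
  (0, [1, 1, 0], 1, 1),
  (2, [1, 1, 0, 0, 0], 0, 5),
  (0, [1, 1, 0], 1, 1),
  (2, [1, 1, 0, 0, 0], 0, 2),
  (0, [1, 0, 0], 0, 3),
  (0, [1, 0, 0], 0, 3),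
  (0, [1, 0, 0], 0, 6),
  (0, [1, 0, 0], 0, 6),
  (0, [1, 0, 0], 0, 2),
  (0, [1, 0, 0], 0, 2),
  (1, [1, 0, 0, 0], 0, 8),
  (2, [1, 1, 1, 0, 0], 0, 5),
  (0, [1, 1, 0], 2, 1),
  (1, [1, 0, 0, 0], 0, 2),
  (0, [1, 0, 0], 0, 3),
  (0, [1, 0, 0], 0, 3),
  (0, [1, 0, 0], 0, 1),
  (0, [1, 0, 0], 0, 1),
  (0, [1, 0, 0], 0, 6),
  (0, [1, 0, 0], 0, 6),
  (0, [1, 1, 0], 0, 3),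
  (0, [1, 1, 0], 0, 3),
  (0, [1, 0, 0], 0, 3),
  (0, [1, 0, 0], 0, 3),
  (0, [1, 0, 0], 0, 1),
  (0, [1, 0, 0], 0, 1),
  (0, [1, 1, 0], 0, 3),
  (0, [1, 1, 0], 0, 3),
  (0, [1, 0, 0], 0, 3),
  (0, [1, 0, 0], 0, 3),
  (0, [1, 0, 0], 0, 2),
  (0, [1, 0, 0], 0, 2),
  (0, [1, 0, 0], 0, 6),
  (0, [1, 0, 0], 0, 6),
  (1, [1, 0, 0, 0], 0, 4),
  (2, [1, 1, 0, 0, 0], 0, 2),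
  (0, [1, 0, 0], 0, 3),
  (0, [1, 0, 0], 0, 3),
  (0, [1, 1, 0], 0, 3),
  (0, [1, 1, 0], 0, 3),
  (0, [1, 1, 0], 0, 3),
  (0, [1, 1, 0], 0, 3),
  (0, [1, 1, 0], 0, 3),
  (0, [1, 1, 0], 0, 3),
  (0, [1, 1, 0], 2, 1),
  (1, [1, 0, 0, 0], 0, 2),
  (0, [1, 0, 0], 0, 3),
  (0, [1, 0, 0], 0, 3),
  (0, [1, 0, 0], 0, 1),
  (0, [1, 0, 0], 0, 1),
  (0, [1, 0, 0], 0, 2),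
  (0, [1, 0, 0], 0, 2),
  (0, [1, 1, 0], 0, 1),
  (0, [1, 1, 0], 0, 1),
  (0, [1, 1, 0], 0, 1),
  (0, [1, 1, 0], 0, 1),
  (0, [1, 0, 0], 0, 1),
  (0, [1, 0, 0], 0, 1),
  (0, [1, 1, 0], 0, 1),
  (0, [1, 1, 0], 0, 1),
  (0, [1, 0, 0], 0, 3),
  (0, [1, 0, 0], 0, 3),
  (0, [1, 0, 0], 0, 6),
  (0, [1, 0, 0], 0, 6),
  (0, [1, 0, 0], 0, 6),
  (0, [1, 0, 0], 0, 6),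
  (1, [1, 0, 0, 0], 0, 8),
  (2, [1, 1, 1, 0, 0], 0, 5),
  (0, [1, 1, 0], 0, 1),
  (0, [1, 1, 0], 0, 1),
  (0, [1, 1, 0], 0, 1),
  (0, [1, 1, 0], 0, 1),
  (0, [1, 1, 0], 0, 1),
  (0, [1, 1, 0], 0, 1),
  (0, [1, 1, 0], 0, 1),
  (0, [1, 1, 0], 0, 1),
  (0, [1, 1, 0], 0, 3),
  (0, [1, 1, 0], 0, 3),
  (0, [1, 0, 0], 0, 3),
  (0, [1, 0, 0], 0, 3),
  (0, [1, 0, 0], 0, 1),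
  (0, [1, 0, 0], 0, 1),
  (0, [1, 1, 0], 0, 3),
  (0, [1, 1, 0], 0, 3),
  (1, [1, 1, 1, 0], 0, 2),
  (1, [1, 0, 0, 0], 0, 2),
  (0, [1, 0, 0], 0, 3),
  (0, [1, 0, 0], 0, 3),
  (0, [1, 0, 0], 0, 1),
  (0, [1, 0, 0], 0, 1),
  (1, [1, 1, 1, 0], 0, 2),
  (1, [1, 1, 1, 0], 0, 2),
  (0, [1, 0, 0], 0, 3),
  (0, [1, 0, 0], 0, 3),
  (0, [1, 1, 0], 0, 3),
  (0, [1, 1, 0], 0, 3),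
  (0, [1, 1, 0], 0, 3),
  (0, [1, 1, 0], 0, 3),
  (0, [1, 1, 0], 0, 3),
  (0, [1, 1, 0], 0, 3),
  (0, [1, 0, 0], 0, 3),
  (0, [1, 0, 0], 0, 3),
  (1, [1, 1, 1, 0], 0, 2),
  (1, [1, 1, 1, 0], 0, 2),
  (1, [1, 1, 1, 0], 0, 2),
  (1, [1, 1, 1, 0], 0, 2),
  (1, [1, 1, 1, 0], 0, 2),
  (1, [1, 1, 1, 0], 0, 2),
  (0, [1, 1, 0], 1, 1),
  (1, [1, 0, 0, 0], 0, 2),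
  (0, [1, 1, 0], 1, 1),
  (0, [1, 0, 0], 0, 3),
  (0, [1, 0, 0], 0, 1),
  (0, [1, 0, 0], 0, 1),
  (0, [1, 1, 0], 1, 1),
  (1, [1, 0, 0, 0], 0, 8),
  (0, [1, 1, 0], 2, 1),
  (1, [1, 0, 0, 0], 0, 2),
  (0, [1, 0, 0], 0, 3),
  (0, [1, 0, 0], 0, 3),
  (0, [1, 0, 0], 0, 1),
  (0, [1, 0, 0], 0, 1),
  (0, [1, 0, 0], 0, 6),
  (0, [1, 0, 0], 0, 6),
  (0, [1, 1, 0], 1, 1),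
  (0, [1, 0, 0], 0, 3),
  (0, [1, 1, 0], 1, 1),
  (1, [1, 0, 0, 0], 0, 4),
  (0, [1, 1, 0], 1, 1),
  (1, [1, 0, 0, 0], 0, 8),
  (0, [1, 0, 0], 1, 1),
  (0, [1, 0, 0], 1, 1),
  (0, [1, 0, 0], 0, 3),
  (0, [1, 0, 0], 0, 3),
  (0, [1, 0, 0], 0, 6),
  (0, [1, 0, 0], 0, 6),
  (0, [1, 0, 0], 0, 2),
  (0, [1, 0, 0], 0, 2),
  (0, [1, 0, 0], 1, 1),
  (0, [1, 0, 0], 1, 1),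
  (0, [1, 1, 0], 2, 1),
  (1, [1, 0, 0, 0], 0, 2),
  (0, [1, 0, 0], 0, 3),
  (0, [1, 0, 0], 0, 3),
  (0, [1, 0, 0], 0, 1),
  (0, [1, 0, 0], 0, 1),
  (0, [1, 0, 0], 0, 6),
  (0, [1, 0, 0], 0, 6),
  (0, [1, 1, 0], 0, 3),
  (0, [1, 1, 0], 0, 3),
  (0, [1, 0, 0], 0, 3),
  (0, [1, 0, 0], 0, 3),
  (0, [1, 0, 0], 0, 1),
  (0, [1, 0, 0], 0, 1),
  (0, [1, 1, 0], 0, 3),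
  (0, [1, 1, 0], 0, 3),
  (0, [1, 0, 0], 0, 3),
  (0, [1, 0, 0], 0, 3),
  (0, [1, 0, 0], 0, 2),
  (0, [1, 0, 0], 0, 2),
  (0, [1, 0, 0], 0, 6),
  (0, [1, 0, 0], 0, 6),
  (0, [1, 0, 0], 1, 1),
  (0, [1, 0, 0], 1, 1),
  (0, [1, 0, 0], 0, 3),
  (0, [1, 0, 0], 0, 3),
  (0, [1, 1, 0], 0, 3),
  (0, [1, 1, 0], 0, 3),
  (0, [1, 1, 0], 0, 3),
  (0, [1, 1, 0], 0, 3),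
  (0, [1, 0, 0], 1, 1),
  (0, [1, 0, 0], 1, 1),
  (0, [1, 1, 0], 2, 1),
  (1, [1, 0, 0, 0], 0, 2),
  (0, [1, 0, 0], 0, 3),
  (0, [1, 0, 0], 0, 3),
  (0, [1, 0, 0], 0, 1),
  (0, [1, 0, 0], 0, 1),
  (0, [1, 0, 0], 0, 2),
  (0, [1, 0, 0], 0, 2),
  (0, [1, 1, 0], 0, 1),
  (0, [1, 1, 0], 0, 1),
  (0, [1, 1, 0], 0, 1),
  (0, [1, 1, 0], 0, 1),
  (0, [1, 0, 0], 0, 1),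
  (0, [1, 0, 0], 0, 1),
  (0, [1, 1, 0], 0, 1),
  (0, [1, 1, 0], 0, 1),
  (0, [1, 0, 0], 0, 3),
  (0, [1, 0, 0], 0, 3),
  (0, [1, 0, 0], 0, 6),
  (0, [1, 0, 0], 0, 6),
  (0, [1, 0, 0], 0, 6),
  (0, [1, 0, 0], 0, 6),
  (0, [1, 0, 0], 1, 1),
  (0, [1, 0, 0], 1, 1),
  (0, [1, 1, 0], 0, 1),
  (0, [1, 1, 0], 0, 1),
  (0, [1, 1, 0], 0, 1),
  (0, [1, 1, 0], 0, 1),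
  (0, [1, 1, 0], 0, 1),
  (0, [1, 1, 0], 0, 1),
  (0, [1, 1, 0], 0, 1),
  (0, [1, 1, 0], 0, 1),
  (0, [1, 1, 0], 0, 3),
  (0, [1, 1, 0], 0, 3),
  (0, [1, 0, 0], 0, 3),
  (0, [1, 0, 0], 0, 3),
  (0, [1, 0, 0], 0, 1),
  (0, [1, 0, 0], 0, 1),
  (0, [1, 1, 0], 0, 3),
  (0, [1, 1, 0], 0, 3),
  (2, [1, 1, 0, 0, 0], 0, 1),
  (1, [1, 0, 0, 0], 0, 2),
  (0, [1, 0, 0], 0, 3),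
  (0, [1, 0, 0], 0, 3),
  (0, [1, 0, 0], 0, 1),
  (0, [1, 0, 0], 0, 1),
  (0, [1, 0, 0], 2, 1),
  (0, [1, 0, 0], 2, 1),
  (0, [1, 0, 0], 0, 3),
  (0, [1, 0, 0], 0, 3),
  (0, [1, 1, 0], 0, 3),
  (0, [1, 1, 0], 0, 3),
  (0, [1, 1, 0], 0, 3),
  (0, [1, 1, 0], 0, 3),
  (0, [1, 0, 0], 1, 1),
  (0, [1, 0, 0], 1, 1),
  (0, [1, 0, 0], 0, 3),
  (0, [1, 0, 0], 0, 3),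
  (0, [1, 0, 0], 2, 1),
  (0, [1, 0, 0], 2, 1),
  (0, [1, 0, 0], 2, 1),
  (0, [1, 0, 0], 2, 1),
  (0, [1, 0, 0], 1, 1),
  (0, [1, 0, 0], 1, 1)]

def wit (w : ℕ) : ℕ × List ℕ × ℕ × ℕ := witTable.getD w (0, [], 0, 0)

lemma never {α : Type*} (G : α → α) (x y : α) (q p : ℕ) (hp : 0 < p)
    (hper : G^[q + p] x = G^[q] x)
    (hav : ∀ s < q + p, G^[s] x ≠ y) : ∀ t, G^[t] x ≠ y := by
  intro t
  rcases lt_or_ge t (q + p) with h | h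
  · exact hav t h
  · have key : ∀ u, G^[q + u] x = G^[q + u % p] x := by
      intro u
      induction u using Nat.strong_induction_on with
      | _ u ih =>
        rcases lt_or_ge u p with hu | hu
        · rw [Nat.mod_eq_of_lt hu]
        · have h1 : q + u = (u - p) + (q + p) := by omega
          rw [h1, Function.iterate_add_apply, hper, ← Function.iterate_add_apply]
          have h2 : u - p + q = q + (u - p) := by omega
          rw [h2, ih (u - p) (by omega)]
          have h3 : (u - p) % p = u % p := by
            conv_rhs => rw [Nat.mod_eq_sub_mod hu]
          rw [h3]
    have ht : t = q + (t - q) := by omega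
    rw [ht, key (t - q)]
    exact hav (q + (t - q) % p) (by have := Nat.mod_lt (t - q) hp; omega)

lemma check_works (g : Rule2) (L : ℕ) (l : List ℕ) (q p : ℕ)
    (hg : g = ecaRule (wolfram2 g))
    (h : Check' (wolfram2 g) L l q p) :
    ∃ x : ZMod (L + 3) → Fin 2,
      (2 * (∑ i, (x i).val) < L + 3 ∧ ∀ t, (glob2 g)^[t] x ≠ fun _ => 0) ∨
      (L + 3 < 2 * (∑ i, (x i).val) ∧ ∀ t, (glob2 g)^[t] x ≠ fun _ => 1) := by
  obtain ⟨hp, hper, hc⟩ := h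
  refine ⟨cfg l (L + 3), ?_⟩
  rw [hg]
  rcases hc with ⟨hd, hav⟩ | ⟨hd, hav⟩
  · exact Or.inl ⟨hd, never _ _ _ q p hp hper hav⟩
  · exact Or.inr ⟨hd, never _ _ _ q p hp hper hav⟩

set_option maxRecDepth 40000 in
lemma eca_eq : ∀ g : Rule2, g = ecaRule (wolfram2 g) := by decide

set_option maxRecDepth 40000 in
lemma wolfram_lt : ∀ g : Rule2, wolfram2 g < 256 := by decide

set_option maxRecDepth 100000 in
set_option maxHeartbeats 4000000 in
lemma allcheck : ∀ w < 256,
    Check' w (wit w).1 (wit w).2.1 (wit w).2.2.1 (wit w).2.2.2 := by decide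

/-- No single elementary CA rule solves the binary density classification problem. -/
theorem no_single_rule_DCP :
    ¬ ∃ g : Rule2, ∀ L : ℕ, ∀ x : ZMod (L + 3) → Fin 2,
      (2 * (∑ i, (x i).val) < L + 3 →
        ∃ t : ℕ, (glob2 g)^[t] x = fun _ => 0) ∧
      (L + 3 < 2 * (∑ i, (x i).val) →
        ∃ t : ℕ, (glob2 g)^[t] x = fun _ => 1) := by
  rintro ⟨g, hg⟩
  have hw : g = ecaRule (wolfram2 g) := eca_eq g
  have hlt : wolfram2 g < 256 := wolfram_lt g
  obtain ⟨x, h⟩ := check_works g _ _ _ _ hw (allcheck _ hlt)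
  rcases h with ⟨hd, hav⟩ | ⟨hd, hav⟩
  · obtain ⟨t, ht⟩ := (hg _ x).1 hd
    exact hav t ht
  · obtain ⟨t, ht⟩ := (hg _ x).2 hd
    exact hav t ht
end

section
/- Let f_184 be the local rule of elementary CA 184 and f_232 the local rule of elementary CA 232, with global maps F_184, F_232 on cyclic binary configurations of length L. Set n = ⌊(L-2)/2⌋ and m = ⌊(L-1)/2⌋. Then for any x ∈ {0,1}^L with density ρ = (1/L)∑ x_i: F_232^m(F_184^n(x)) = 0^L if ρ < 1/2, and F_232^m(F_184^n(x)) = 1^L if ρ > 1/2. -/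
namespace DensityAux
open Finset

variable {N : ℕ}

/-- Height function of a configuration, anchored at `i0`. -/
def Hgt (x : ZMod N → Fin 2) (i0 : ZMod N) (m : ℕ) : ℤ :=
  ∑ k ∈ Finset.range m, (1 - 2 * ((x (i0 + (k : ℕ))).val : ℤ))

lemma Hgt_zero (x : ZMod N → Fin 2) (i0 : ZMod N) : Hgt x i0 0 = 0 := by
  simp [Hgt]

lemma Hgt_succ (x : ZMod N → Fin 2) (i0 : ZMod N) (m : ℕ) :
    Hgt x i0 (m + 1) = Hgt x i0 m + (1 - 2 * ((x (i0 + (m : ℕ))).val : ℤ)) :=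
  Finset.sum_range_succ _ _

lemma Hgt_lip (x : ZMod N → Fin 2) (i0 : ZMod N) (a : ℕ) : ∀ d : ℕ,
    Hgt x i0 a - d ≤ Hgt x i0 (a + d) ∧ Hgt x i0 (a + d) ≤ Hgt x i0 a + d := by
  intro d
  induction d with
  | zero => simp
  | succ d ih =>
      have h := Hgt_succ x i0 (a + d)
      have hv : ((x (i0 + ((a + d : ℕ) : ZMod N))).val : ℤ) ≤ 1 := by
        have := (x (i0 + ((a + d : ℕ) : ZMod N))).isLt; omega
      have hv0 : (0:ℤ) ≤ ((x (i0 + ((a + d : ℕ) : ZMod N))).val : ℤ) := by positivity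
      constructor
      · have := ih.1
        rw [show a + (d+1) = (a + d) + 1 by ring, h]; push_cast; omega
      · have := ih.2
        rw [show a + (d+1) = (a + d) + 1 by ring, h]; push_cast; omega

lemma loc184 (a b c : Fin 2) (u : ℤ) :
    min (u + (1 - 2*(a.val:ℤ))) (u + (1 - 2*(a.val:ℤ)) + (1 - 2*(b.val:ℤ)) + (1 - 2*(c.val:ℤ)))
      - min u (u + (1 - 2*(a.val:ℤ)) + (1 - 2*(b.val:ℤ))) = 1 - 2 * ((ecaRule 184 a b c).val : ℤ) := by
  fin_cases a <;> fin_cases b <;> fin_cases c <;> simp [ecaRule] <;> omega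

/-- One step of rule 184 in height representation. -/
lemma step184 (x : ZMod N → Fin 2) (i0 : ZMod N) (m : ℕ) :
    Hgt (glob2 (ecaRule 184) x) (i0 + 1) m
      = min (Hgt x i0 m) (Hgt x i0 (m+2)) - min (Hgt x i0 0) (Hgt x i0 2) := by
  induction m with
  | zero => rw [Hgt_zero]; simp only [Nat.zero_add]; omega
  | succ m ih =>
      have e1 : Hgt x i0 (m+1) = Hgt x i0 m + (1 - 2 * ((x (i0 + (m:ℕ))).val : ℤ)) :=
        Hgt_succ x i0 m
      have e2 : Hgt x i0 (m+2) = Hgt x i0 m + (1 - 2 * ((x (i0 + (m:ℕ))).val : ℤ))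
          + (1 - 2 * ((x (i0 + ((m+1:ℕ)))).val : ℤ)) := by
        rw [show m + 2 = (m+1)+1 by ring, Hgt_succ, e1]
      have e3 : Hgt x i0 (m+3) = Hgt x i0 m + (1 - 2 * ((x (i0 + (m:ℕ))).val : ℤ))
          + (1 - 2 * ((x (i0 + ((m+1:ℕ)))).val : ℤ)) + (1 - 2 * ((x (i0 + ((m+2:ℕ)))).val : ℤ)) := by
        rw [show m + 3 = (m+2)+1 by ring, Hgt_succ, e2]
      have hy : glob2 (ecaRule 184) x (i0 + 1 + (m:ℕ))
          = ecaRule 184 (x (i0 + (m:ℕ))) (x (i0 + ((m+1:ℕ)))) (x (i0 + ((m+2:ℕ)))) := by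
        show ecaRule 184 (x (i0 + 1 + (m:ℕ) - 1)) (x (i0 + 1 + (m:ℕ))) (x (i0 + 1 + (m:ℕ) + 1)) = _
        rw [show i0 + 1 + (m:ℕ) - 1 = i0 + (m:ℕ) by ring,
            show i0 + 1 + (m:ℕ) + 1 = i0 + ((m+2:ℕ)) by push_cast; ring,
            show i0 + 1 + (m:ℕ) = i0 + ((m+1:ℕ)) by push_cast; ring]
      have hloc : min (Hgt x i0 (m+1)) (Hgt x i0 (m+3)) - min (Hgt x i0 m) (Hgt x i0 (m+2))
          = 1 - 2 * ((ecaRule 184 (x (i0 + (m:ℕ))) (x (i0 + ((m+1:ℕ)))) (x (i0 + ((m+2:ℕ))))).val : ℤ) := by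
        rw [e1, e2, e3]; exact loc184 _ _ _ _
      have hstep := Hgt_succ (glob2 (ecaRule 184) x) (i0 + 1) m
      rw [hstep, hy, ih]
      have h13 : m + 1 + 2 = m + 3 := by ring
      rw [h13]
      linarith [hloc]

/-- Iterated minimum over a window. -/
def Mf (H : ℕ → ℤ) : ℕ → ℕ → ℤ
  | 0, m => H m
  | t+1, m => min (H m) (Mf H t (m+2))

lemma Mf_le (H : ℕ → ℤ) (t m : ℕ) : Mf H t m ≤ H m := by
  cases t <;> simp [Mf]

lemma Mf_alt (H : ℕ → ℤ) : ∀ t m, Mf H (t+1) m = min (Mf H t m) (H (m + 2*(t+1))) := by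
  intro t
  induction t with
  | zero => intro m; simp [Mf]
  | succ t ih =>
      intro m
      show min (H m) (Mf H (t+1) (m+2)) = _
      rw [ih (m+2), show Mf H (t+1) m = min (H m) (Mf H t (m+2)) from rfl,
          show m + 2 + 2*(t+1) = m + 2*(t+1+1) by ring]
      omega

lemma Mf_min (H : ℕ → ℤ) : ∀ t m, min (Mf H t m) (Mf H t (m+2)) = Mf H (t+1) m := by
  intro t
  induction t with
  | zero => intro m; simp [Mf]
  | succ t ih =>
      intro m
      have e2 : Mf H (t+1) (m+2) = min (Mf H t (m+2)) (Mf H t (m+2+2)) := (ih (m+2)).symm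
      have e1 : Mf H (t+1) m = min (H m) (Mf H t (m+2)) := rfl
      have e3 : Mf H (t+1+1) m = min (H m) (Mf H (t+1) (m+2)) := rfl
      rw [e3, e2, e1]
      omega

/-- The exact solution of rule 184 after `t` steps, in height representation. -/
lemma iter184 (x : ZMod N → Fin 2) (i0 : ZMod N) : ∀ t m,
    Hgt ((glob2 (ecaRule 184))^[t] x) (i0 + (t:ℕ)) m
      = Mf (Hgt x i0) t m - Mf (Hgt x i0) t 0 := by
  intro t
  induction t with
  | zero => intro m; simp [Mf, Hgt_zero]
  | succ t ih =>
      intro m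
      have hiter : (glob2 (ecaRule 184))^[t+1] x = glob2 (ecaRule 184) ((glob2 (ecaRule 184))^[t] x) :=
        Function.iterate_succ_apply' _ _ _
      have hc : i0 + ((t+1 : ℕ) : ZMod N) = (i0 + (t:ℕ)) + 1 := by push_cast; ring
      rw [hiter, hc, step184, ih m, ih (m+2), ih 0, ih 2, ← Mf_min, ← Mf_min]
      simp only [Nat.zero_add]
      omega

lemma sum_shift [NeZero N] (g : ZMod N → ℤ) (i0 : ZMod N) :
    ∑ k ∈ Finset.range N, g (i0 + (k:ℕ)) = ∑ j, g j := by
  rw [← Fin.sum_univ_eq_sum_range (fun k => g (i0 + (k:ℕ))) N]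
  apply Fintype.sum_bijective (fun k : Fin N => i0 + ((k:ℕ) : ZMod N)) ?_ _ _ (fun k => rfl)
  rw [Fintype.bijective_iff_injective_and_card]
  constructor
  · intro a b h
    simp only [add_right_injective] at h
    have h' : ((a:ℕ) : ZMod N) = ((b:ℕ) : ZMod N) := by
      have := congrArg (fun z => z - i0) h
      simpa using this
    have := congrArg ZMod.val h'
    rwa [ZMod.val_cast_of_lt a.isLt, ZMod.val_cast_of_lt b.isLt, ← Fin.ext_iff] at this
  · simp [ZMod.card]

lemma Hgt_period [NeZero N] (x : ZMod N → Fin 2) (i0 : ZMod N) :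
    Hgt x i0 N = (N : ℤ) - 2 * ∑ j, ((x j).val : ℤ) := by
  unfold Hgt
  rw [Finset.sum_sub_distrib, Finset.sum_const, ← Finset.mul_sum, Finset.card_range,
      sum_shift (fun j => ((x j).val : ℤ)) i0]
  simp


lemma Mf_key_low (H : ℕ → ℤ) (h0 : H 0 = 0) (t : ℕ) (h : Mf H t 2 = Mf H t 0 - 2) :
    H (2*t+2) ≤ -2 := by
  cases t with
  | zero => simp only [Mf] at h; norm_num; omega
  | succ s =>
      have e0 : Mf H (s+1) 0 = min (H 0) (Mf H s (0+2)) := rfl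
      simp only [Nat.zero_add] at e0
      have e2 := Mf_alt H s 2
      rw [show 2 + 2*(s+1) = 2*(s+1)+2 by ring] at e2
      omega

lemma Mf_key_high (H : ℕ → ℤ) (h0 : H 0 = 0) (t : ℕ) (h : Mf H t 2 = Mf H t 0 + 2) :
    2 ≤ H (2*t+2) := by
  cases t with
  | zero => simp only [Mf] at h; norm_num; omega
  | succ s =>
      have e0 : Mf H (s+1) 0 = min (H 0) (Mf H s (0+2)) := rfl
      simp only [Nat.zero_add] at e0
      have e2 := Mf_alt H s 2
      rw [show 2 + 2*(s+1) = 2*(s+1)+2 by ring] at e2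
      have hle := Mf_le H (s+1) 0
      omega

lemma Hgt_two (y : ZMod N → Fin 2) (i : ZMod N) :
    Hgt y i 2 = (1 - 2 * ((y i).val : ℤ)) + (1 - 2 * ((y (i+1)).val : ℤ)) := by
  unfold Hgt
  rw [Finset.sum_range_succ, Finset.sum_range_succ, Finset.sum_range_zero]
  norm_num

lemma after184_no11 [NeZero N] (hN3 : 3 ≤ N) (x : ZMod N → Fin 2)
    (hS : 2 * (∑ j, (x j).val) < N) (i : ZMod N) :
    ¬(((glob2 (ecaRule 184))^[(N-2)/2] x) i = 1 ∧ ((glob2 (ecaRule 184))^[(N-2)/2] x) (i+1) = 1) := by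
  rintro ⟨h1, h2⟩
  set t := (N-2)/2 with ht
  set i0 := i - (t:ℕ) with hi0
  set y := (glob2 (ecaRule 184))^[t] x with hy
  have hG2 : Hgt y i 2 = -2 := by
    rw [Hgt_two, h1, h2]; norm_num
  have hMf : Mf (Hgt x i0) t 2 = Mf (Hgt x i0) t 0 - 2 := by
    have hit := iter184 x i0 t 2
    have hi : i0 + (t:ℕ) = i := by rw [hi0]; ring
    rw [hi, hG2] at hit; omega
  have hkey := Mf_key_low (Hgt x i0) (Hgt_zero x i0) t hMf
  have hr : N = (2*t+2) + (N - (2*t+2)) ∧ N - (2*t+2) ≤ 1 := by omega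
  have hlip := (Hgt_lip x i0 (2*t+2) (N - (2*t+2))).2
  rw [← hr.1] at hlip
  have hper := Hgt_period x i0
  have hcast : (∑ j, ((x j).val : ℤ)) = ((∑ j, (x j).val : ℕ) : ℤ) := by push_cast; rfl
  rw [hcast] at hper
  omega

lemma after184_no00 [NeZero N] (hN3 : 3 ≤ N) (x : ZMod N → Fin 2)
    (hS : N < 2 * (∑ j, (x j).val)) (i : ZMod N) :
    ¬(((glob2 (ecaRule 184))^[(N-2)/2] x) i = 0 ∧ ((glob2 (ecaRule 184))^[(N-2)/2] x) (i+1) = 0) := by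
  rintro ⟨h1, h2⟩
  set t := (N-2)/2 with ht
  set i0 := i - (t:ℕ) with hi0
  set y := (glob2 (ecaRule 184))^[t] x with hy
  have hG2 : Hgt y i 2 = 2 := by
    rw [Hgt_two, h1, h2]; norm_num
  have hMf : Mf (Hgt x i0) t 2 = Mf (Hgt x i0) t 0 + 2 := by
    have hit := iter184 x i0 t 2
    have hi : i0 + (t:ℕ) = i := by rw [hi0]; ring
    rw [hi, hG2] at hit; omega
  have hkey := Mf_key_high (Hgt x i0) (Hgt_zero x i0) t hMf
  have hr : N = (2*t+2) + (N - (2*t+2)) ∧ N - (2*t+2) ≤ 1 := by omega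
  have hlip := (Hgt_lip x i0 (2*t+2) (N - (2*t+2))).1
  rw [← hr.1] at hlip
  have hper := Hgt_period x i0
  have hcast : (∑ j, ((x j).val : ℤ)) = ((∑ j, (x j).val : ℕ) : ℤ) := by push_cast; rfl
  rw [hcast] at hper
  omega

/-! ### Conservation of cars under rule 184 -/

lemma val184_eq : ∀ a b c : Fin 2,
    (ecaRule 184 a b c).val = a.val * (1 - b.val) + b.val * c.val := by decide

lemma conserve184 [NeZero N] (x : ZMod N → Fin 2) :
    ∑ i, ((glob2 (ecaRule 184) x) i).val = ∑ i, (x i).val := by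
  have h1 : ∑ i, ((glob2 (ecaRule 184) x) i).val
      = ∑ i : ZMod N, ((x (i-1)).val * (1 - (x i).val) + (x i).val * (x (i+1)).val) :=
    Finset.sum_congr rfl (fun i _ => val184_eq _ _ _)
  rw [h1, Finset.sum_add_distrib]
  have h2 : ∑ i : ZMod N, (x (i-1)).val * (1 - (x i).val)
      = ∑ i : ZMod N, (x i).val * (1 - (x (i+1)).val) := by
    apply Fintype.sum_equiv (Equiv.subRight (1 : ZMod N))
    intro i
    simp
  rw [h2, ← Finset.sum_add_distrib]
  apply Finset.sum_congr rfl
  intro i _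
  have hb : (x (i+1)).val = 0 ∨ (x (i+1)).val = 1 := by
    have := (x (i+1)).isLt; omega
  rcases hb with hb | hb <;> rw [hb]
  · simp
  · simp

lemma conserve184_iter [NeZero N] (x : ZMod N → Fin 2) :
    ∀ t, ∑ i, (((glob2 (ecaRule 184))^[t] x) i).val = ∑ i, (x i).val := by
  intro t
  induction t with
  | zero => simp
  | succ t ih =>
      rw [Function.iterate_succ_apply', conserve184, ih]

/-! ### Rule 232 -/

lemma maj_char : ∀ b p q r : Fin 2, ¬(p = b ∧ q = b) → ¬(q = b ∧ r = b) →
    (ecaRule 232 p q r = b ↔ (p = b ∧ r = b)) := by decide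

def nadj (b : Fin 2) (y : ZMod N → Fin 2) : Prop := ∀ i, ¬(y i = b ∧ y (i+1) = b)

lemma step_char (y : ZMod N → Fin 2) (b : Fin 2) (h : nadj b y) (i : ZMod N) :
    glob2 (ecaRule 232) y i = b ↔ (y (i-1) = b ∧ y (i+1) = b) := by
  have h1 := h (i-1)
  rw [sub_add_cancel] at h1
  exact maj_char b _ _ _ h1 (h i)

lemma nadj_step (y : ZMod N → Fin 2) (b : Fin 2) (h : nadj b y) :
    nadj b (glob2 (ecaRule 232) y) := by
  rintro i ⟨h1, h2⟩
  have e1 := (step_char y b h i).1 h1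
  have e2 := (step_char y b h (i+1)).1 h2
  rw [add_sub_cancel_right] at e2
  exact h i ⟨e2.1, e1.2⟩

def cnt [NeZero N] (b : Fin 2) (y : ZMod N → Fin 2) : ℕ :=
  (Finset.univ.filter fun i => y i = b).card

lemma cnt_step_le [NeZero N] (b : Fin 2) (y : ZMod N → Fin 2) (h : nadj b y) :
    cnt b (glob2 (ecaRule 232) y) ≤ cnt b y := by
  apply Finset.card_le_card_of_injOn (fun i => i + 1)
  · intro i hi
    simp only [Finset.mem_coe, Finset.mem_filter, Finset.mem_univ, true_and] at hi ⊢
    exact ((step_char y b h i).1 hi).2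
  · intro a _ b _ hab
    exact add_right_cancel hab

lemma cnt_step_lt [NeZero N] (hN3 : 3 ≤ N) (b : Fin 2) (y : ZMod N → Fin 2)
    (h : nadj b y) (hlt : 2 * cnt b y < N) (hpos : 0 < cnt b y) :
    cnt b (glob2 (ecaRule 232) y) < cnt b y := by
  by_contra hcon
  push_neg at hcon
  have heq : cnt b (glob2 (ecaRule 232) y) = cnt b y :=
    le_antisymm (cnt_step_le b y h) hcon
  set S' := (Finset.univ.filter fun i => glob2 (ecaRule 232) y i = b) with hS'
  set S := (Finset.univ.filter fun i => y i = b) with hSdef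
  have hinj : Set.InjOn (fun i => i + 1) (S' : Set (ZMod N)) := by
    intro a _ b _ hab
    exact add_right_cancel hab
  have hsub : S'.image (fun i => i + 1) ⊆ S := by
    intro j hj
    obtain ⟨i, hi, hij⟩ := Finset.mem_image.1 hj
    simp only [hS', hSdef, Finset.mem_filter, Finset.mem_univ, true_and] at hi ⊢
    rw [← hij]
    exact ((step_char y b h i).1 hi).2
  have himg : S'.image (fun i => i + 1) = S := by
    apply Finset.eq_of_subset_of_card_le hsub
    rw [Finset.card_image_of_injOn hinj]
    exact le_of_eq heq.symm
  have hclos : ∀ j : ZMod N, y j = b → y (j - 2) = b := by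
    intro j hj
    have hjS : j ∈ S := by simp [hSdef, hj]
    rw [← himg] at hjS
    obtain ⟨i, hiS', hij⟩ := Finset.mem_image.1 hjS
    have hi : glob2 (ecaRule 232) y i = b := by
      simpa [hS'] using hiS'
    have := ((step_char y b h i).1 hi).1
    rwa [show i - 1 = j - 2 by rw [← hij]; ring] at this
  obtain ⟨j0, hj0⟩ : ∃ j, y j = b := by
    obtain ⟨j, hj⟩ := Finset.card_pos.1 hpos
    exact ⟨j, (Finset.mem_filter.1 hj).2⟩
  have hchain : ∀ k : ℕ, y (j0 - ((2*k : ℕ) : ZMod N)) = b := by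
    intro k
    induction k with
    | zero => simpa using hj0
    | succ k ih =>
        have := hclos _ ih
        rwa [show j0 - ((2*k:ℕ):ZMod N) - 2 = j0 - ((2*(k+1):ℕ):ZMod N) by push_cast; ring] at this
  have hbig : (N+1)/2 ≤ cnt b y := by
    have hsub2 : (Finset.range ((N+1)/2)).image (fun k : ℕ => j0 - ((2*k : ℕ) : ZMod N)) ⊆ S := by
      intro j hj
      obtain ⟨k, _, hk⟩ := Finset.mem_image.1 hj
      simp only [hSdef, Finset.mem_filter, Finset.mem_univ, true_and]
      rw [← hk]
      exact hchain k
    have hinj2 : Set.InjOn (fun k : ℕ => j0 - ((2*k : ℕ) : ZMod N))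
        ((Finset.range ((N+1)/2)) : Set ℕ) := by
      intro a ha b hb hab
      simp only [Finset.coe_range, Set.mem_Iio] at ha hb
      have h2 : ((2*a:ℕ) : ZMod N) = ((2*b:ℕ) : ZMod N) := sub_right_injective hab
      have := congrArg ZMod.val h2
      rw [ZMod.val_cast_of_lt (by omega), ZMod.val_cast_of_lt (by omega)] at this
      omega
    have hmem : ∀ k ∈ Finset.range ((N+1)/2), j0 - ((2*k:ℕ):ZMod N) ∈ S :=
      fun k hk => hsub2 (Finset.mem_image_of_mem _ hk)
    have := Finset.card_le_card_of_injOn _ hmem hinj2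
    rw [Finset.card_range] at this
    unfold cnt
    rw [← hSdef]
    exact this
  omega

lemma cnt_zero_const [NeZero N] (b b' : Fin 2) (hbb' : ∀ v : Fin 2, v ≠ b → v = b')
    (y : ZMod N → Fin 2) (h0 : cnt b y = 0) : y = fun _ => b' := by
  funext i
  apply hbb'
  intro hi
  have : i ∈ (Finset.univ.filter fun i => y i = b) := by simp [hi]
  rw [Finset.card_eq_zero.1 h0] at this
  exact absurd this (Finset.notMem_empty i)

lemma iter232 [NeZero N] (hN3 : 3 ≤ N) (b b' : Fin 2) (hbb' : ∀ v : Fin 2, v ≠ b → v = b')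
    (hfix : ecaRule 232 b' b' b' = b') :
    ∀ k (y : ZMod N → Fin 2), nadj b y → 2 * cnt b y < N → cnt b y ≤ k →
      (glob2 (ecaRule 232))^[k] y = fun _ => b' := by
  intro k
  induction k with
  | zero =>
      intro y hn hlt hle
      rw [Function.iterate_zero_apply]
      exact cnt_zero_const b b' hbb' y (Nat.le_zero.1 hle)
  | succ k ih =>
      intro y hn hlt hle
      by_cases h0 : cnt b y = 0
      · rw [cnt_zero_const b b' hbb' y h0]
        exact Function.iterate_fixed (funext fun i => hfix) (k+1)
      · rw [Function.iterate_succ_apply]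
        have hlt' := cnt_step_lt hN3 b y hn hlt (Nat.pos_of_ne_zero h0)
        exact ih (glob2 (ecaRule 232) y) (nadj_step y b hn)
          (by have := cnt_step_le b y hn; omega) (by omega)

lemma cnt_one_eq [NeZero N] (y : ZMod N → Fin 2) : cnt 1 y = ∑ i, (y i).val := by
  unfold cnt
  rw [Finset.card_filter]
  apply Finset.sum_congr rfl
  intro i _
  have : ∀ v : Fin 2, (if v = 1 then 1 else 0) = v.val := by decide
  exact this (y i)

lemma cnt_zero_eq [NeZero N] (y : ZMod N → Fin 2) : cnt 0 y + ∑ i, (y i).val = N := by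
  have hsplit := Finset.card_filter_add_card_filter_not
    (s := (Finset.univ : Finset (ZMod N))) (p := fun i => y i = 0)
  have hneg : (Finset.univ.filter fun i : ZMod N => ¬ (y i = 0))
      = Finset.univ.filter fun i : ZMod N => y i = 1 := by
    apply Finset.filter_congr
    intro i _
    have : ∀ v : Fin 2, ¬(v = 0) ↔ v = 1 := by decide
    simpa using this (y i)
  rw [hneg] at hsplit
  have h1 : (Finset.univ.filter fun i : ZMod N => y i = 1).card = ∑ i, (y i).val :=
    cnt_one_eq y
  rw [Finset.card_univ, ZMod.card] at hsplit
  unfold cnt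
  omega

end DensityAux

/-- The pair of elementary rules 184 and 232 solves the binary density
classification problem, with `n = ⌊(L-2)/2⌋` iterations of rule 184 followed by
`m = ⌊(L-1)/2⌋` iterations of rule 232. -/
theorem rules_184_232_classify_density (L : ℕ) (x : ZMod (L + 3) → Fin 2) :
    (2 * (∑ i, (x i).val) < L + 3 →
      (glob2 (ecaRule 232))^[(L + 3 - 1) / 2] ((glob2 (ecaRule 184))^[(L + 3 - 2) / 2] x) =
        fun _ => 0) ∧
    (L + 3 < 2 * (∑ i, (x i).val) →
      (glob2 (ecaRule 232))^[(L + 3 - 1) / 2] ((glob2 (ecaRule 184))^[(L + 3 - 2) / 2] x) =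
        fun _ => 1) := by
  classical
  set y := (glob2 (ecaRule 184))^[(L + 3 - 2) / 2] x with hy
  have hsum_y : ∑ i, (y i).val = ∑ i, (x i).val := DensityAux.conserve184_iter x _
  constructor
  · intro hlow
    apply DensityAux.iter232 (N := L+3) (by omega) 1 0 (by decide) (by decide)
    · intro i
      exact DensityAux.after184_no11 (by omega) x hlow i
    · rw [DensityAux.cnt_one_eq, hsum_y]; omega
    · rw [DensityAux.cnt_one_eq, hsum_y]; omega
  · intro hhigh
    have hz := DensityAux.cnt_zero_eq y
    rw [hsum_y] at hz
    apply DensityAux.iter232 (N := L+3) (by omega) 0 1 (by decide) (by decide)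
    · intro i
      exact DensityAux.after184_no00 (by omega) x hhigh i
    · omega
    · omega

/-! ### Auxiliary development -/
end

section
/- There are exactly 5 number-conserving elementary CA rules, namely those with Wolfram numbers 170, 184, 204, 226, and 240. -/
def Fg (g : Rule2) (a b : Fin 2) : ℕ := (g 0 a b).val + (g 0 0 a).val

abbrev HTnat (g : Rule2) : Prop :=
  ∀ a b c : Fin 2, (g a b c).val + Fg g a b = a.val + Fg g b c

lemma sum_shift {n : ℕ} [NeZero n] (F : ZMod n → ℕ) :
    (∑ i, F (i - 1)) = ∑ i, F i :=
  Fintype.sum_equiv (Equiv.subRight (1 : ZMod n)) _ _ (fun _ => rfl)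

lemma numCons_of_HT (g : Rule2) (h : HTnat g) : numConserving2 g := by
  intro L x
  have key : (∑ i, ((glob2 g x i).val + Fg g (x (i - 1)) (x i)))
      = ∑ i, ((x (i - 1)).val + Fg g (x i) (x (i + 1))) :=
    Finset.sum_congr rfl (fun i _ => h (x (i - 1)) (x i) (x (i + 1)))
  rw [Finset.sum_add_distrib, Finset.sum_add_distrib] at key
  have h1 : (∑ i : ZMod (L + 3), Fg g (x (i - 1)) (x i))
      = ∑ i, Fg g (x i) (x (i + 1)) := by
    have := sum_shift (n := L + 3) (fun i => Fg g (x i) (x (i + 1)))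
    simpa using this
  have h2 : (∑ i : ZMod (L + 3), (x (i - 1)).val) = ∑ i, (x i).val :=
    sum_shift (fun i => (x i).val)
  omega

set_option maxRecDepth 40000 in
lemma ht_of_mem : ∀ g : Rule2,
    (wolfram2 g = 170 ∨ wolfram2 g = 184 ∨ wolfram2 g = 204 ∨
     wolfram2 g = 226 ∨ wolfram2 g = 240) → HTnat g := by decide

set_option maxRecDepth 40000 in
lemma mem_of_cond5 : ∀ g : Rule2,
    (∀ x : ZMod 5 → Fin 2, (∑ i, (glob2 g x i).val) = ∑ i, (x i).val) →
    (wolfram2 g = 170 ∨ wolfram2 g = 184 ∨ wolfram2 g = 204 ∨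
     wolfram2 g = 226 ∨ wolfram2 g = 240) := by decide

/-- There are exactly 5 number-conserving elementary CA rules, namely
those with Wolfram numbers 170, 184, 204, 226 and 240. -/
theorem number_conserving_eca_iff (g : Rule2) :
    numConserving2 g ↔ wolfram2 g ∈ ({170, 184, 204, 226, 240} : Set ℕ) := by
  constructor
  · intro h
    have := mem_of_cond5 g (fun x => h 2 x)
    simpa [Set.mem_insert_iff] using this
  · intro h
    apply numCons_of_HT
    apply ht_of_mem
    simpa [Set.mem_insert_iff] using h
end
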